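/- Let (c₁,B₁),…,(cₘ,Bₘ) be a Brascamp–Lieb datum on ℝⁿ, and let f₁,…,fₘ be nonnegative, upper semi-continuous, compactly supported functions on ℝ^{n₁},…,ℝ^{nₘ} respectively. Define f : ℝⁿ → [0,∞) by f(x) = sup { ∏ᵢ fᵢ(xᵢ)^{cᵢ} : (x₁,…,xₘ) ∈ ℝ^{n₁}×⋯×ℝ^{nₘ}, Σᵢ cᵢ Bᵢ* xᵢ = x }, with the convention sup(∅) = 0. Then f is upper semi-continuous. -/

import Mathlib

open Matrix Set Filter

private lemma usc_comp_apply {X Y : Type*} [TopologicalSpace X] [TopologicalSpace Y]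
    {g : Y → ℝ} (hg : UpperSemicontinuous g) {π : X → Y} (hπ : Continuous π) :
    UpperSemicontinuous fun x => g (π x) := fun x l hl =>
  (hπ.tendsto x).eventually (hg (π x) l hl)

private lemma usc_mul_aux {X : Type*} [TopologicalSpace X] {g h : X → ℝ}
    (hg : UpperSemicontinuous g) (hh : UpperSemicontinuous h)
    (hg0 : ∀ x, 0 ≤ g x) (hh0 : ∀ x, 0 ≤ h x) :
    UpperSemicontinuous fun x => g x * h x := by
  intro x l hl
  have hc : ContinuousAt (fun d : ℝ => (g x + d) * (h x + d)) 0 := by fun_prop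
  have h1 : ∀ᶠ d in nhds (0:ℝ), (g x + d) * (h x + d) < l := by
    have := hc (Iio_mem_nhds (by simpa using hl))
    exact this
  obtain ⟨δ, hδl, hδpos⟩ :=
    ((h1.filter_mono (nhdsWithin_le_nhds : nhdsWithin (0:ℝ) (Ioi 0) ≤ nhds 0)).and
      eventually_mem_nhdsWithin).exists
  filter_upwards [hg x (g x + δ) (by linarith [mem_Ioi.1 hδpos]),
    hh x (h x + δ) (by linarith [mem_Ioi.1 hδpos])] with y hy1 hy2
  exact lt_trans (mul_lt_mul'' hy1 hy2 (hg0 y) (hh0 y)) hδl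

private lemma usc_prod_aux {X ι : Type*} [TopologicalSpace X] (s : Finset ι) (g : ι → X → ℝ)
    (h1 : ∀ i ∈ s, UpperSemicontinuous (g i)) (h0 : ∀ i ∈ s, ∀ x, 0 ≤ g i x) :
    UpperSemicontinuous (fun x => ∏ i ∈ s, g i x) ∧ ∀ x, 0 ≤ ∏ i ∈ s, g i x := by
  induction s using Finset.cons_induction with
  | empty => simpa using upperSemicontinuous_const
  | cons a s ha ih =>
    obtain ⟨ihu, ihn⟩ := ih (fun i hi => h1 i (Finset.mem_cons_of_mem hi))
      (fun i hi => h0 i (Finset.mem_cons_of_mem hi))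
    constructor
    · simpa only [Finset.prod_cons] using
        usc_mul_aux (h1 a (Finset.mem_cons_self a s)) ihu
          (h0 a (Finset.mem_cons_self a s)) ihn
    · intro x
      rw [Finset.prod_cons]
      exact mul_nonneg (h0 a (Finset.mem_cons_self a s) x) (ihn x)

private lemma usc_rpow_aux {X : Type*} [TopologicalSpace X] {g : X → ℝ}
    (hg : UpperSemicontinuous g) (h0 : ∀ x, 0 ≤ g x) {c : ℝ} (hc : 0 < c) :
    UpperSemicontinuous fun x => g x ^ c := by
  intro x l hl
  have hl0 : 0 < l := lt_of_le_of_lt (Real.rpow_nonneg (h0 x) c) hl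
  have hkey : g x < l ^ c⁻¹ := by
    by_contra hcon
    push_neg at hcon
    have h2 := Real.rpow_le_rpow (Real.rpow_nonneg hl0.le _) hcon hc.le
    rw [← Real.rpow_mul hl0.le, inv_mul_cancel₀ hc.ne', Real.rpow_one] at h2
    exact absurd hl (not_lt.2 h2)
  filter_upwards [hg x _ hkey] with y hy
  calc g y ^ c < (l ^ c⁻¹) ^ c := Real.rpow_lt_rpow (h0 y) hy hc
    _ = l := by rw [← Real.rpow_mul hl0.le, inv_mul_cancel₀ hc.ne', Real.rpow_one]

private lemma usc_bdd_aux {X : Type*} [TopologicalSpace X] {g : X → ℝ}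
    (hg : UpperSemicontinuous g) (hcpt : HasCompactSupport g) :
    ∃ M, 0 ≤ M ∧ ∀ x, g x ≤ M := by
  obtain ⟨t, ht⟩ := hcpt.elim_finite_subcover (fun x => g ⁻¹' Set.Iio (g x + 1))
    (fun x => hg.isOpen_preimage _) (fun x hx => Set.mem_iUnion.2 ⟨x, by simp⟩)
  obtain ⟨M₀, hM₀⟩ := (t.finite_toSet.image fun x => g x + 1).bddAbove
  refine ⟨max M₀ 0, le_max_right _ _, fun x => ?_⟩
  by_cases hx : x ∈ tsupport g
  · obtain ⟨x₀, hx₀t, hx₀⟩ := Set.mem_iUnion₂.1 (ht hx)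
    have h2 : g x₀ + 1 ≤ M₀ := hM₀ (Set.mem_image_of_mem _ hx₀t)
    have h3 : g x < g x₀ + 1 := hx₀
    exact le_trans (le_of_lt (lt_of_lt_of_le h3 h2)) (le_max_left _ _)
  · rw [image_eq_zero_of_notMem_tsupport hx]
    exact le_max_right _ _

theorem sup_convolution_upperSemicontinuous
    (m n : ℕ) (ni : Fin m → ℕ) (c : Fin m → ℝ) (hc : ∀ i, 0 < c i)
    (B : ∀ i, Matrix (Fin (ni i)) (Fin n) ℝ)
    (hB : ∀ i, Function.Surjective (B i).mulVec)
    (f : ∀ i, (Fin (ni i) → ℝ) → ℝ)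
    (hf0 : ∀ i x, 0 ≤ f i x)
    (hfusc : ∀ i, UpperSemicontinuous (f i))
    (hfcpt : ∀ i, HasCompactSupport (f i)) :
    UpperSemicontinuous (fun x : Fin n → ℝ =>
      sSup {r : ℝ | ∃ y : ∀ i, Fin (ni i) → ℝ,
        (∑ i, c i • (B i)ᵀ.mulVec (y i)) = x ∧ r = ∏ i, (f i (y i)) ^ (c i)}) := by
  set E := ∀ i, Fin (ni i) → ℝ with hE
  set L : E → (Fin n → ℝ) := fun y => ∑ i, c i • (B i)ᵀ.mulVec (y i) with hL
  set G : E → ℝ := fun y => ∏ i, (f i (y i)) ^ (c i) with hG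
  set S : (Fin n → ℝ) → Set ℝ := fun x => {r : ℝ | ∃ y : E, L y = x ∧ r = G y} with hS
  -- continuity of L
  have hLcont : Continuous L := by
    refine continuous_finset_sum _ fun i _ => Continuous.const_smul ?_ (c i)
    have h1 : Continuous fun v : Fin (ni i) → ℝ => (B i)ᵀ.mulVec v :=
      ((B i)ᵀ.mulVecLin).continuous_of_finiteDimensional
    exact h1.comp (continuous_apply i)
  -- upper semicontinuity and nonnegativity of G
  have hGp := usc_prod_aux Finset.univ (fun i (y : E) => (f i (y i)) ^ (c i))
    (fun i _ => usc_rpow_aux (usc_comp_apply (hfusc i) (continuous_apply i : Continuous fun y : E => y i))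
      (fun y => hf0 i (y i)) (hc i))
    (fun i _ y => Real.rpow_nonneg (hf0 i (y i)) _)
  have hGusc : UpperSemicontinuous G := hGp.1
  have hG0 : ∀ y, 0 ≤ G y := hGp.2
  -- uniform bound
  choose Mf hMf0 hMf using fun i => usc_bdd_aux (hfusc i) (hfcpt i)
  set M : ℝ := ∏ i, Mf i ^ c i with hM
  have hSb : ∀ x, ∀ r ∈ S x, r ≤ M := by
    rintro x r ⟨y, -, rfl⟩
    exact Finset.prod_le_prod (fun i _ => Real.rpow_nonneg (hf0 i (y i)) _)
      (fun i _ => Real.rpow_le_rpow (hf0 i (y i)) (hMf i (y i)) (hc i).le)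
  have hSbdd : ∀ x, BddAbove (S x) := fun x => ⟨M, fun r hr => hSb x r hr⟩
  have hS0 : ∀ x, 0 ≤ sSup (S x) := by
    intro x
    refine Real.sSup_nonneg ?_
    rintro r ⟨y, -, rfl⟩
    exact hG0 y
  -- main argument
  intro x₀ l hl
  simp only at hl
  obtain ⟨l', hl'1, hl'2⟩ := exists_between hl
  have hl'0 : 0 < l' := lt_of_le_of_lt (hS0 x₀) hl'1
  set C : Set E := {y | l' ≤ G y} with hC
  have hCclosed : IsClosed C := hGusc.isClosed_preimage l'
  have hK : IsCompact (Set.univ.pi fun i => tsupport (f i)) :=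
    isCompact_univ_pi fun i => hfcpt i
  have hCsub : C ⊆ Set.univ.pi fun i => tsupport (f i) := by
    intro y hy i _
    by_contra hni
    have hz : f i (y i) = 0 := image_eq_zero_of_notMem_tsupport hni
    have hGz : G y = 0 :=
      Finset.prod_eq_zero (Finset.mem_univ i) (by rw [hz, Real.zero_rpow (hc i).ne'])
    rw [Set.mem_setOf_eq, hGz] at hy
    linarith
  have hCcpt : IsCompact C := hK.of_isClosed_subset hCclosed hCsub
  have himg : IsClosed (L '' C) := (hCcpt.image hLcont).isClosed
  have hx₀ : x₀ ∉ L '' C := by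
    rintro ⟨y, hyC, hyL⟩
    have hmem : G y ∈ S x₀ := ⟨y, hyL, rfl⟩
    have : l' ≤ sSup (S x₀) := le_trans hyC (le_csSup (hSbdd x₀) hmem)
    linarith
  filter_upwards [himg.isOpen_compl.mem_nhds hx₀] with x hx
  show sSup (S x) < l
  refine lt_of_le_of_lt (Real.sSup_le ?_ hl'0.le) hl'2
  rintro r ⟨y, hyL, rfl⟩
  by_contra hcon
  push_neg at hcon
  exact hx ⟨y, hcon.le, hyL⟩
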